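/- Let A be a finite alphabet and Σ ⊆ A^{ℤ×ℤ} a sofic set of colourings. Define the dyadic encoding Φ(Σ) ⊆ (A × A)^{ℤ×ℤ} as the set of configurations z : ℤ × ℤ → A × A such that (i) the first-component configuration π₁ ∘ z belongs to Σ, and (ii) the second component satisfies π₂(z(n+1, 2k)) = π₁(z(n, k)) and π₂(z(n+1, 2k+1)) = π₂(z(n, k)) for all n, k ∈ ℤ. Then Φ(Σ) is a sofic set of colourings over the alphabet A × A. -/

import Mathlib

/-- The support of size `n`: `𝕌_n = {(p,q) : p ≤ n-1, q ≤ 2^p - 1}` (natural subtraction). -/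
def U (n : ℕ) : Set (ℕ × ℕ) := {pq | pq.1 ≤ n - 1 ∧ pq.2 ≤ 2 ^ pq.1 - 1}

instance (n : ℕ) : DecidablePred (· ∈ U n) := fun pq =>
  inferInstanceAs (Decidable (pq.1 ≤ n - 1 ∧ pq.2 ≤ 2 ^ pq.1 - 1))

instance (n : ℕ) : Fintype (U n) :=
  Fintype.ofFinset ((Finset.range (n + 1) ×ˢ Finset.range (2 ^ (n + 1))).filter (· ∈ U n))
    (by
      intro pq
      simp only [Finset.mem_filter, Finset.mem_product, Finset.mem_range]
      constructor
      · exact fun h => h.2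
      · intro h
        obtain ⟨h1, h2⟩ := h
        refine ⟨⟨by omega, ?_⟩, ⟨h1, h2⟩⟩
        have hp : 2 ^ pq.1 ≤ 2 ^ (n + 1) := Nat.pow_le_pow_right (by norm_num) (by omega)
        have : 0 < 2 ^ pq.1 := Nat.pow_pos (by norm_num)
        omega)

/-- A pattern over alphabet `A`: a size `n+1 ≥ 1` together with a colouring of `𝕌_{n+1}`. -/
def Pattern (A : Type) : Type := Σ n : ℕ, (U (n + 1) → A)

/-- The size of a pattern (always ≥ 1). -/
def Pattern.size {A : Type} (P : Pattern A) : ℕ := P.1 + 1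

instance {A : Type} [Encodable A] (n : ℕ) : Encodable (↥(U n) → A) :=
  Encodable.fintypeArrowOfEncodable

instance {A : Type} [Encodable A] : Encodable (Pattern A) :=
  inferInstanceAs (Encodable (Σ n : ℕ, (U (n + 1) → A)))

/-- `P` (with support `𝕌_n`) appears in the configuration `x` at position `(n₀, k₀)`. -/
def AppearsAt {A : Type} {n : ℕ} (P : U n → A) (x : ℤ × ℤ → A) (g : ℤ × ℤ) : Prop :=
  ∀ pq : U n, x (g.1 + (pq.1.1 : ℤ), 2 ^ pq.1.1 * g.2 + (pq.1.2 : ℤ)) = P pq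

/-- The pattern `P` appears somewhere in the configuration `x`. -/
def Pattern.Appears {A : Type} (P : Pattern A) (x : ℤ × ℤ → A) : Prop :=
  ∃ g : ℤ × ℤ, AppearsAt P.2 x g

/-- The set of colourings avoiding every pattern of `F`. -/
def colourings {A : Type} (F : Set (Pattern A)) : Set ((ℤ × ℤ) → A) :=
  {x | ∀ P ∈ F, ¬ P.Appears x}

/-- A set of colourings is of finite type (CFT). -/
def IsCFT {A : Type} (S : Set ((ℤ × ℤ) → A)) : Prop :=
  ∃ F : Set (Pattern A), F.Finite ∧ S = colourings F

/-- A set of colourings is sofic: letter-to-letter projection of a CFT. -/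
def IsSofic {A : Type} (S : Set ((ℤ × ℤ) → A)) : Prop :=
  ∃ (B : Type) (_ : Fintype B) (S' : Set ((ℤ × ℤ) → B)) (φ : B → A),
    IsCFT S' ∧ S = (fun w => φ ∘ w) '' S'

/-- A set of colourings is effective: defined by a set of forbidden patterns whose
set of codes (under the standard encoding of patterns) is recursively enumerable. -/
def IsEffective {A : Type} [Encodable A] (S : Set ((ℤ × ℤ) → A)) : Prop :=
  ∃ F : Set (Pattern A),
    REPred (fun c : ℕ => ∃ P ∈ F, Encodable.encode P = c) ∧ S = colourings F

/-- The dyadic encoding of a set of colourings `S`: configurations over `A × A` whose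
first component lies in `S` and whose second component is the dyadic encoding of the
first one, i.e. `π₂(z(n+1, 2k)) = π₁(z(n, k))` and `π₂(z(n+1, 2k+1)) = π₂(z(n, k))`. -/
def DyadicImage {A : Type} (S : Set ((ℤ × ℤ) → A)) : Set ((ℤ × ℤ) → A × A) :=
  {z | (fun g => (z g).1) ∈ S ∧
    ∀ n k : ℤ, (z (n + 1, 2 * k)).2 = (z (n, k)).1 ∧ (z (n + 1, 2 * k + 1)).2 = (z (n, k)).2}

/-- The three elements of `U 2`. -/
def u00 : U 2 := ⟨(0, 0), by constructor <;> norm_num⟩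
def u10 : U 2 := ⟨(1, 0), by constructor <;> norm_num⟩
def u11 : U 2 := ⟨(1, 1), by constructor <;> norm_num⟩

/-- A "bad" size-2 pattern over `B × A`: one violating the dyadic constraint. -/
def Bad {A B : Type} (φ : B → A) (f : U 2 → B × A) : Prop :=
  ¬ ((f u10).2 = φ (f u00).1 ∧ (f u11).2 = (f u00).2)

lemma appearsAt_two {C : Type} {x : ℤ × ℤ → C} {f : U 2 → C} {g : ℤ × ℤ}
    (h : AppearsAt f x g) :
    f u00 = x (g.1, g.2) ∧ f u10 = x (g.1 + 1, 2 * g.2) ∧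
      f u11 = x (g.1 + 1, 2 * g.2 + 1) := by
  have h0 := h u00
  have h1 := h u10
  have h2 := h u11
  simp only [u00, u10, u11] at h0 h1 h2
  norm_num at h0 h1 h2
  exact ⟨h0.symm, h1.symm, h2.symm⟩

lemma appearsAt_restrict {C : Type} {n : ℕ} (x : ℤ × ℤ → C) (g : ℤ × ℤ) :
    AppearsAt (fun u : U n => x (g.1 + (u.1.1 : ℤ), 2 ^ u.1.1 * g.2 + (u.1.2 : ℤ))) x g :=
  fun _ => rfl

/-- The dyadic encoding of a sofic set of colourings is sofic. -/
theorem dyadicImage_isSofic {A : Type} [Fintype A] [Nonempty A]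
    (S : Set ((ℤ × ℤ) → A)) (hS : IsSofic S) : IsSofic (DyadicImage S) := by
  classical
  obtain ⟨B, instB, S', φ, ⟨F, hFfin, hS'⟩, hSimg⟩ := hS
  -- the new alphabet is `B × A`, with projection `φ'`
  set φ' : B × A → A × A := fun p => (φ p.1, p.2) with hφ'
  -- lifted forbidden patterns
  set F₁ : Set (Pattern (B × A)) :=
    {Q | (⟨Q.1, fun u => (Q.2 u).1⟩ : Pattern B) ∈ F} with hF₁def
  -- size-2 patterns violating the dyadic constraint
  set F₂ : Set (Pattern (B × A)) := Sigma.mk 1 '' {f : U 2 → B × A | Bad φ f} with hF₂def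
  have hF₁fin : F₁.Finite := by
    have hsub : F₁ ⊆ ⋃ P ∈ F,
        Sigma.mk P.1 '' {f : U (P.1 + 1) → B × A | (fun u => (f u).1) = P.2} := by
      intro Q hQ
      exact Set.mem_biUnion hQ ⟨Q.2, rfl, rfl⟩
    exact (hFfin.biUnion fun P _ => (Set.toFinite _).image _).subset hsub
  have hF₂fin : F₂.Finite := (Set.toFinite _).image _
  refine ⟨B × A, inferInstance, colourings (F₁ ∪ F₂), φ',
    ⟨F₁ ∪ F₂, hF₁fin.union hF₂fin, rfl⟩, ?_⟩
  ext z
  constructor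
  · -- z ∈ DyadicImage S → z is a projection
    rintro ⟨hz1, hz2⟩
    rw [hSimg] at hz1
    obtain ⟨w, hw, hwz⟩ := hz1
    rw [hS'] at hw
    refine ⟨fun g => (w g, (z g).2), ?_, ?_⟩
    · -- avoids F₁ ∪ F₂
      rintro P (hP | hP) ⟨g, hg⟩
      · -- lifted pattern: project to a pattern of F appearing in w
        exact hw _ hP ⟨g, fun u => congrArg Prod.fst (hg u)⟩
      · -- bad size-2 pattern: contradicts the dyadic constraint
        obtain ⟨f, hf, rfl⟩ := hP
        have hg' : AppearsAt f (fun g => (w g, (z g).2)) g := hg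
        obtain ⟨e0, e1, e2⟩ := appearsAt_two hg'
        have hc := hz2 g.1 g.2
        refine hf ⟨?_, ?_⟩
        · rw [e1, e0]
          have : (z (g.1 + 1, 2 * g.2)).2 = φ (w (g.1, g.2)) := by
            rw [hc.1]
            exact (congrFun hwz (g.1, g.2)).symm
          exact this
        · rw [e2, e0]
          exact hc.2
    · -- the projection is z
      funext g
      exact Prod.ext (congrFun hwz g) rfl
  · -- a projection is in DyadicImage S
    rintro ⟨w', hw', rfl⟩
    constructor
    · -- first component is in S
      rw [hSimg]
      refine ⟨fun g => (w' g).1, ?_, rfl⟩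
      rw [hS']
      rintro P hP ⟨g, hg⟩
      -- the lift of P along w' is in F₁ and appears in w'
      set Q : Pattern (B × A) :=
        ⟨P.1, fun u => w' (g.1 + (u.1.1 : ℤ), 2 ^ u.1.1 * g.2 + (u.1.2 : ℤ))⟩ with hQdef
      have hQF₁ : Q ∈ F₁ := by
        show (⟨P.1, fun u => (w' (g.1 + (u.1.1 : ℤ), 2 ^ u.1.1 * g.2 + (u.1.2 : ℤ))).1⟩ :
          Pattern B) ∈ F
        have : (fun u : U (P.1 + 1) =>
            (w' (g.1 + (u.1.1 : ℤ), 2 ^ u.1.1 * g.2 + (u.1.2 : ℤ))).1) = P.2 :=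
          funext fun u => hg u
        rw [this]
        exact hP
      exact hw' Q (Or.inl hQF₁) ⟨g, appearsAt_restrict w' g⟩
    · -- dyadic constraints hold
      intro n k
      set f : U 2 → B × A :=
        fun u => w' ((n, k).1 + (u.1.1 : ℤ), 2 ^ u.1.1 * (n, k).2 + (u.1.2 : ℤ)) with hfdef
      have happ : AppearsAt f w' (n, k) := appearsAt_restrict w' (n, k)
      have hnotbad : ¬ Bad φ f := by
        intro hb
        exact hw' ⟨1, f⟩ (Or.inr ⟨f, hb, rfl⟩) ⟨(n, k), happ⟩
      obtain ⟨e0, e1, e2⟩ := appearsAt_two happ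
      obtain ⟨hb1, hb2⟩ : (f u10).2 = φ (f u00).1 ∧ (f u11).2 = (f u00).2 :=
        not_not.mp hnotbad
      constructor
      · show (w' (n + 1, 2 * k)).2 = φ (w' (n, k)).1
        rw [← e1, ← e0] at *
        exact hb1
      · show (w' (n + 1, 2 * k + 1)).2 = (w' (n, k)).2
        rw [← e2, ← e0] at *
        exact hb2
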